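/- Let μ₀ be a probability measure on ℝ with ∫ e^{λx} dμ₀(x) < ∞ for all λ > 0. Fix γ > 0 and let K_γ := {μ ∈ P(ℝ) : h(μ | μ₀) ≤ γ}. Then the map μ ↦ ∫ max(x,0) dμ(x) is upper semicontinuous on K_γ with respect to weak convergence. -/

import Mathlib

open MeasureTheory Filter Real Set
open scoped ENNReal NNReal Topology

open Classical in
/-- Relative entropy `h(μ | ν) = ∫ log(dμ/dν) dμ` when `μ ≪ ν` (and the integral exists),
and `+∞` otherwise. -/
noncomputable def relEnt {α : Type*} [MeasurableSpace α] (μ ν : Measure α) : ℝ≥0∞ :=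
  if μ ≪ ν ∧ Integrable (llr μ ν) μ then ENNReal.ofReal (∫ x, llr μ ν x ∂μ) else ⊤

section Aux

variable {α : Type*} [MeasurableSpace α] {μ ν : Measure α}

lemma aux_integral_llr_nonneg [IsProbabilityMeasure μ] [IsProbabilityMeasure ν]
    (hμν : μ ≪ ν) (h_int : Integrable (llr μ ν) μ) : 0 ≤ ∫ x, llr μ ν x ∂μ := by
  have hexp : Integrable (fun x => exp (- llr μ ν x)) μ :=
    Measure.integrable_toReal_rnDeriv.congr (exp_neg_llr hμν).symm
  have hj := convexOn_exp.map_average_le continuous_exp.continuousOn isClosed_univ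
    (Filter.Eventually.of_forall fun x => mem_univ _) h_int.neg (f := fun x => -(llr μ ν x))
    (by exact hexp)
  rw [average_eq_integral, average_eq_integral] at hj
  have h1 : ∫ x, exp (-(llr μ ν x)) ∂μ ≤ 1 := by
    rw [integral_congr_ae (g := fun x => (ν.rnDeriv μ x).toReal)
      (by filter_upwards [exp_neg_llr hμν] with x hx using hx)]
    rw [Measure.integral_toReal_rnDeriv']
    simp only [measureReal_def, measure_univ, ENNReal.toReal_one]
    have : (0:ℝ) ≤ (ν.singularPart μ Set.univ).toReal := ENNReal.toReal_nonneg
    linarith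
  have h2 : exp (∫ x, -(llr μ ν x) ∂μ) ≤ 1 := hj.trans h1
  rw [exp_le_one_iff, integral_neg] at h2
  linarith

lemma aux_dv [IsProbabilityMeasure μ] [IsProbabilityMeasure ν]
    (hμν : μ ≪ ν) (h_int : Integrable (llr μ ν) μ) {f : α → ℝ}
    (hfμ : Integrable f μ) (hfν : Integrable (fun x => exp (f x)) ν) :
    ∫ x, f x ∂μ ≤ ∫ x, llr μ ν x ∂μ + log (∫ x, exp (f x) ∂ν) := by
  haveI : IsProbabilityMeasure (ν.tilted f) := isProbabilityMeasure_tilted hfν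
  have hac : μ ≪ ν.tilted f := hμν.trans (absolutelyContinuous_tilted hfν)
  have h_int' : Integrable (llr μ (ν.tilted f)) μ :=
    integrable_llr_tilted_right hμν hfμ h_int hfν
  have h0 : 0 ≤ ∫ x, llr μ (ν.tilted f) x ∂μ := aux_integral_llr_nonneg hac h_int'
  rw [integral_llr_tilted_right hμν hfμ hfν h_int] at h0
  linarith


lemma aux_integrable_posPart {μ₀ : Measure ℝ} [IsProbabilityMeasure μ₀] {μ : Measure ℝ}
    [IsProbabilityMeasure μ] (hμν : μ ≪ μ₀) (h_int : Integrable (llr μ μ₀) μ)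
    {lam : ℝ} (hlam : 0 < lam) (hE : Integrable (fun x => exp (lam * max x 0)) μ₀) :
    Integrable (fun x => max x 0) μ := by
  set B : ℝ := ((∫ x, llr μ μ₀ x ∂μ) + log (∫ x, exp (lam * max x 0) ∂μ₀)) / lam with hB
  have hmono : ∀ m : ℕ, (fun x : ℝ => min (max x 0) (m:ℝ)) ≤ fun x => max x 0 :=
    fun m x => min_le_left _ _
  have hfm_nonneg : ∀ (m : ℕ) (x : ℝ), 0 ≤ min (max x 0) (m:ℝ) :=
    fun m x => le_min (le_max_right _ _) (Nat.cast_nonneg m)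
  have hfm_int : ∀ m : ℕ, Integrable (fun x : ℝ => min (max x 0) (m:ℝ)) μ := by
    intro m
    refine (integrable_const (m:ℝ)).mono' ?_ (ae_of_all _ fun x => ?_)
    · exact (((continuous_id.max continuous_const).min continuous_const)).aestronglyMeasurable
    · rw [Real.norm_eq_abs, abs_of_nonneg (hfm_nonneg m x)]
      exact min_le_right _ _
  have hexp_int : ∀ m : ℕ, Integrable (fun x : ℝ => exp (lam * min (max x 0) (m:ℝ))) μ₀ := by
    intro m
    refine hE.mono' ?_ (ae_of_all _ fun x => ?_)
    · exact (Real.continuous_exp.comp (continuous_const.mul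
        ((continuous_id.max continuous_const).min continuous_const))).aestronglyMeasurable
    · rw [Real.norm_eq_abs, abs_of_nonneg (exp_pos _).le]
      exact exp_le_exp.2 (mul_le_mul_of_nonneg_left (min_le_left _ _) hlam.le)
  have hbdd : ∀ m : ℕ, ∫ x, min (max x 0) (m:ℝ) ∂μ ≤ B := by
    intro m
    have h1 := aux_dv hμν h_int ((hfm_int m).const_mul lam) (hexp_int m)
    rw [integral_const_mul] at h1
    have h2 : log (∫ x, exp (lam * min (max x 0) (m:ℝ)) ∂μ₀)
        ≤ log (∫ x, exp (lam * max x 0) ∂μ₀) := by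
      refine Real.log_le_log (integral_exp_pos (hexp_int m)) ?_
      exact integral_mono (hexp_int m) hE fun x =>
        exp_le_exp.2 (mul_le_mul_of_nonneg_left (min_le_left _ _) hlam.le)
    rw [hB, le_div_iff₀ hlam, mul_comm]
    linarith
  have hmeas : Measurable fun x : ℝ => max x 0 := measurable_id.max measurable_const
  refine ⟨hmeas.aestronglyMeasurable, ?_⟩
  refine (hasFiniteIntegral_iff_ofReal (f := fun x : ℝ => max x 0) (ae_of_all _ fun x => le_max_right _ _)).mpr ?_
  have hsup : ∫⁻ x, ENNReal.ofReal (max x 0) ∂μ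
      = ⨆ m : ℕ, ∫⁻ x, ENNReal.ofReal (min (max x 0) (m:ℝ)) ∂μ := by
    rw [← lintegral_iSup]
    · refine lintegral_congr fun x => ?_
      refine le_antisymm ?_ (iSup_le fun m => ENNReal.ofReal_le_ofReal (min_le_left _ _))
      refine le_trans (le_of_eq ?_) (le_iSup _ ⌈max x 0⌉₊)
      rw [min_eq_left (Nat.le_ceil _)]
    · intro m
      exact (((measurable_id.max measurable_const).min measurable_const)).ennreal_ofReal
    · intro m m' hmm x
      exact ENNReal.ofReal_le_ofReal (min_le_min le_rfl (Nat.cast_le.2 hmm))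
  rw [hsup]
  refine lt_of_le_of_lt (iSup_le fun m => ?_) (show ENNReal.ofReal B < ⊤ from ENNReal.ofReal_lt_top)
  rw [← ofReal_integral_eq_lintegral_ofReal (hfm_int m) (ae_of_all _ (hfm_nonneg m))]
  exact ENNReal.ofReal_le_ofReal (hbdd m)

lemma aux_bound {μ₀ : Measure ℝ} [IsProbabilityMeasure μ₀] {μ : Measure ℝ}
    [IsProbabilityMeasure μ]
    (hμν : μ ≪ μ₀) (h_int : Integrable (llr μ μ₀) μ) {lam : ℝ} (hlam : 0 < lam)
    {g : ℝ → ℝ} (hg : Continuous g) (hg0 : ∀ x, 0 ≤ g x) (hgle : ∀ x, g x ≤ max x 0)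
    (hE : Integrable (fun x => exp (lam * max x 0)) μ₀) :
    lam * ∫ x, g x ∂μ ≤ (∫ x, llr μ μ₀ x ∂μ) + log (∫ x, exp (lam * g x) ∂μ₀) := by
  have hInt : Integrable (fun x : ℝ => max x 0) μ :=
    aux_integrable_posPart hμν h_int hlam hE
  have hgint : Integrable g μ := by
    refine hInt.mono' hg.aestronglyMeasurable (ae_of_all _ fun x => ?_)
    rw [Real.norm_eq_abs, abs_of_nonneg (hg0 x)]; exact hgle x
  have hEg : Integrable (fun x => exp (lam * g x)) μ₀ := by
    refine hE.mono' (Real.continuous_exp.comp (continuous_const.mul hg)).aestronglyMeasurable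
      (ae_of_all _ fun x => ?_)
    rw [Real.norm_eq_abs, abs_of_nonneg (exp_pos _).le]
    exact exp_le_exp.2 (mul_le_mul_of_nonneg_left (hgle x) hlam.le)
  have h := aux_dv hμν h_int (hgint.const_mul lam) hEg
  rwa [integral_const_mul] at h

end Aux

/-- Let `μ₀` be a probability measure on `ℝ` with `∫ e^{λx} dμ₀ < ∞` for all
`λ > 0`, and fix `γ > 0`. Then on `K_γ = {μ : h(μ | μ₀) ≤ γ}` the map
`μ ↦ ∫ max(x,0) dμ` is upper semicontinuous with respect to weak convergence of
probability measures. -/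
theorem stmt14 (μ₀ : Measure ℝ) [IsProbabilityMeasure μ₀]
    (hM : ∀ lam : ℝ, 0 < lam → Integrable (fun x => Real.exp (lam * x)) μ₀)
    (γ : ℝ) (hγ : 0 < γ) :
    UpperSemicontinuousOn
      (fun μ : ProbabilityMeasure ℝ => ∫ x, max x 0 ∂(μ : Measure ℝ))
      {μ : ProbabilityMeasure ℝ | relEnt (μ : Measure ℝ) μ₀ ≤ ENNReal.ofReal γ} := by
  have hK : ∀ ν : ProbabilityMeasure ℝ,
      relEnt (ν : Measure ℝ) μ₀ ≤ ENNReal.ofReal γ →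
      ((ν : Measure ℝ) ≪ μ₀ ∧ Integrable (llr (ν : Measure ℝ) μ₀) (ν : Measure ℝ)) ∧
        ∫ x, llr (ν : Measure ℝ) μ₀ x ∂(ν : Measure ℝ) ≤ γ := by
    intro ν hν
    unfold relEnt at hν
    split_ifs at hν with h
    · exact ⟨h, (ENNReal.ofReal_le_ofReal_iff hγ.le).mp hν⟩
    · exact absurd (top_le_iff.mp hν) ENNReal.ofReal_ne_top
  intro μ hμ y hy
  simp only [mem_setOf_eq] at hμ hy
  set ε : ℝ := y - ∫ x, max x 0 ∂(μ : Measure ℝ) with hεdef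
  have hε : 0 < ε := sub_pos.2 hy
  set lam : ℝ := 6 * γ / ε with hlamdef
  have hlam : 0 < lam := by positivity
  -- integrability of exp(lam * x⁺) w.r.t. μ₀
  have hE : Integrable (fun x => exp (lam * max x 0)) μ₀ := by
    refine ((hM lam hlam).add (integrable_const 1)).mono'
      ((Real.continuous_exp.comp (continuous_const.mul
        (continuous_id.max continuous_const))).aestronglyMeasurable) (ae_of_all _ fun x => ?_)
    rw [Real.norm_eq_abs, abs_of_nonneg (exp_pos _).le]
    simp only [Pi.add_apply]
    rcases le_total x 0 with h | h
    · rw [max_eq_right h, mul_zero, exp_zero]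
      have := (exp_pos (lam * x)).le; linarith
    · rw [max_eq_left h]; linarith
  -- the tail log term tends to 0
  set L : ℕ → ℝ := fun n => log (∫ x, exp (lam * max (x - n) 0) ∂μ₀) with hLdef
  have hL0 : Tendsto L atTop (𝓝 0) := by
    have h1 : Tendsto (fun n : ℕ => ∫ x, exp (lam * max (x - n) 0) ∂μ₀) atTop (𝓝 1) := by
      have := tendsto_integral_of_dominated_convergence (μ := μ₀)
        (F := fun n : ℕ => fun x : ℝ => exp (lam * max (x - n) 0)) (f := fun _ => (1:ℝ))
        (fun x => exp (lam * max x 0))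
        (fun n => (Real.continuous_exp.comp (continuous_const.mul
          ((continuous_id.sub continuous_const).max continuous_const))).aestronglyMeasurable)
        hE
        (fun n => ae_of_all _ fun x => by
          rw [Real.norm_eq_abs, abs_of_nonneg (exp_pos _).le]
          exact exp_le_exp.2 (mul_le_mul_of_nonneg_left
            (max_le_max (sub_le_self x (Nat.cast_nonneg n)) le_rfl) hlam.le))
        (ae_of_all _ fun x => by
          refine Tendsto.congr' ?_ tendsto_const_nhds
          filter_upwards [eventually_ge_atTop ⌈x⌉₊] with m hm
          have hx : x - m ≤ 0 := sub_nonpos.2 ((Nat.le_ceil x).trans (Nat.cast_le.2 hm))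
          rw [max_eq_right hx, mul_zero, exp_zero])
      simpa using this
    have := h1.log one_ne_zero
    simpa using this
  obtain ⟨n, hn⟩ : ∃ n : ℕ, L n < lam * ε / 6 :=
    (hL0.eventually (gt_mem_nhds (by positivity : (0:ℝ) < lam * ε / 6))).exists
  -- the truncated bounded continuous function
  set fn : BoundedContinuousFunction ℝ ℝ := BoundedContinuousFunction.ofNormedAddCommGroup
      (fun x => min (max x 0) (n:ℝ))
      (by continuity) (n:ℝ) (fun x => by
        rw [Real.norm_eq_abs, abs_of_nonneg (le_min (le_max_right _ _) (Nat.cast_nonneg n))]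
        exact min_le_right _ _) with hfndef
  have hfn : ∀ x : ℝ, fn x = min (max x 0) (n:ℝ) := fun x => rfl
  have hfn_int : ∀ ν : Measure ℝ, IsProbabilityMeasure ν → Integrable (fun x => fn x) ν := by
    intro ν hνP
    refine (integrable_const (n:ℝ)).mono' fn.continuous.aestronglyMeasurable
      (ae_of_all _ fun x => ?_)
    rw [hfn, Real.norm_eq_abs, abs_of_nonneg (le_min (le_max_right _ _) (Nat.cast_nonneg n))]
    exact min_le_right _ _
  -- pointwise splitting
  have hptwise : ∀ x : ℝ, max x 0 ≤ min (max x 0) (n:ℝ) + max (x - n) 0 := by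
    intro x
    rcases le_total x (n:ℝ) with h | h
    · rw [min_eq_left (max_le h (Nat.cast_nonneg n))]
      have := le_max_right (x - (n:ℝ)) 0; linarith
    · have h0 : (0:ℝ) ≤ n := Nat.cast_nonneg n
      rw [min_eq_right (h.trans (le_max_left x 0)), max_eq_left (sub_nonneg.2 h),
        max_eq_left (h0.trans h)]
      ring_nf; exact le_rfl
  -- key uniform estimate on K
  have hkey : ∀ ν : ProbabilityMeasure ℝ, relEnt (ν : Measure ℝ) μ₀ ≤ ENNReal.ofReal γ →
      ∫ x, max x 0 ∂(ν : Measure ℝ) ≤ (∫ x, fn x ∂(ν : Measure ℝ)) + (γ + L n) / lam := by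
    intro ν hν
    obtain ⟨⟨hac, hll⟩, hγ'⟩ := hK ν hν
    have hInt : Integrable (fun x : ℝ => max x 0) (ν : Measure ℝ) :=
      aux_integrable_posPart hac hll hlam hE
    have hgb := aux_bound hac hll hlam (g := fun x => max (x - (n:ℝ)) 0)
      ((continuous_id.sub continuous_const).max continuous_const)
      (fun x => le_max_right _ _)
      (fun x => max_le_max (sub_le_self x (Nat.cast_nonneg n)) le_rfl) hE
    have hg_int : Integrable (fun x : ℝ => max (x - (n:ℝ)) 0) (ν : Measure ℝ) := by
      refine hInt.mono' (((continuous_id.sub continuous_const).max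
        continuous_const)).aestronglyMeasurable (ae_of_all _ fun x => ?_)
      rw [Real.norm_eq_abs, abs_of_nonneg (le_max_right _ _)]
      exact max_le_max (sub_le_self x (Nat.cast_nonneg n)) le_rfl
    have h1 : ∫ x, max x 0 ∂(ν : Measure ℝ)
        ≤ ∫ x, (min (max x 0) (n:ℝ) + max (x - n) 0) ∂(ν : Measure ℝ) := by
      refine integral_mono hInt ?_ hptwise
      exact ((hfn_int _ inferInstance).congr (ae_of_all _ fun x => (hfn x))).add hg_int
    rw [integral_add ((hfn_int _ inferInstance).congr (ae_of_all _ fun x => (hfn x))) hg_int]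
      at h1
    have h2 : ∫ x, max (x - (n:ℝ)) 0 ∂(ν : Measure ℝ) ≤ (γ + L n) / lam := by
      rw [le_div_iff₀ hlam, mul_comm]
      exact hgb.trans (by simp only [hLdef]; linarith)
    have h3 : ∫ x, min (max x 0) (n:ℝ) ∂(ν : Measure ℝ) = ∫ x, fn x ∂(ν : Measure ℝ) :=
      integral_congr_ae (ae_of_all _ fun x => (hfn x).symm)
    linarith
  -- arithmetic: (γ + L n)/lam < ε/3
  have hlamε : lam * ε = 6 * γ := by
    rw [hlamdef]; field_simp
  have hdiv : (γ + L n) / lam < ε / 3 := by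
    rw [div_lt_iff₀ hlam]
    nlinarith
  -- continuity of the truncated functional
  have hFcont := ProbabilityMeasure.continuous_integral_boundedContinuousFunction (X := ℝ) fn
  have hev : ∀ᶠ ν : ProbabilityMeasure ℝ in 𝓝 μ,
      ∫ x, fn x ∂(ν : Measure ℝ) < (∫ x, fn x ∂(μ : Measure ℝ)) + ε / 6 :=
    (hFcont.continuousAt (x := μ)).eventually
      (gt_mem_nhds (lt_add_of_pos_right _ (by positivity)))
  have hFμ : ∫ x, fn x ∂(μ : Measure ℝ) ≤ ∫ x, max x 0 ∂(μ : Measure ℝ) := by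
    obtain ⟨⟨hac, hll⟩, _⟩ := hK μ hμ
    refine integral_mono (hfn_int _ inferInstance)
      (aux_integrable_posPart hac hll hlam hE) fun x => ?_
    rw [hfn]; exact min_le_left _ _
  filter_upwards [nhdsWithin_le_nhds hev, self_mem_nhdsWithin] with ν h1 h2
  replace h2 : relEnt (ν : Measure ℝ) μ₀ ≤ ENNReal.ofReal γ := h2
  have := hkey ν h2
  have hfinal : ∫ x, max x 0 ∂(ν : Measure ℝ)
      < (∫ x, max x 0 ∂(μ : Measure ℝ)) + ε / 6 + ε / 3 := by linarith
  have : ε / 6 + ε / 3 < ε := by linarith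
  linarith
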